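/- arXiv:2502.12793 — 2 statements merged into one kernel-verified Lean document; each statement's English description precedes it below -/
import Mathlib

section
/- Let p ∈ ℝ^n and q ∈ ℝ^m be probability vectors with strictly positive entries, let C ∈ ℝ^{n×m} be a cost matrix, and for each ε > 0 let γ_ε denote the unique minimizer over Γ(p, q) of ⟨γ, C⟩_F − ε H(γ), where H(γ) = −Σ_{i,j} γ_{ij}(log γ_{ij} − 1). Then as ε → ∞, γ_ε converges to the trivial coupling p ⊗ q, i.e. (γ_ε)_{ij} → p_i q_j for all i, j. -/
open Filter
open scoped BigOperators

/-- The transportation polytope `Γ(p, q)`: matrices with nonnegative entries, row sums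
`p` and column sums `q`. -/
def transportationPolytope {n m : ℕ} (p : Fin n → ℝ) (q : Fin m → ℝ) :
    Set (Matrix (Fin n) (Fin m) ℝ) :=
  {γ | (∀ i j, 0 ≤ γ i j) ∧ (∀ i, ∑ j, γ i j = p i) ∧ (∀ j, ∑ i, γ i j = q j)}

lemma aux_nonneg {a b : ℝ} (ha : 0 ≤ a) (hb : 0 < b) :
    0 ≤ a * Real.log a - a * Real.log b - a + b := by
  rcases eq_or_lt_of_le ha with h | h
  · rw [← h]; simpa using hb.le
  · have hlog : Real.log (b / a) ≤ b / a - 1 := Real.log_le_sub_one_of_pos (by positivity)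
    rw [Real.log_div hb.ne' h.ne'] at hlog
    have h2 := mul_le_mul_of_nonneg_left hlog h.le
    have h3 : a * (b / a - 1) = b - a := by field_simp
    nlinarith

lemma aux_quad {a b : ℝ} (ha : 0 ≤ a) (hb : 0 < b) (hb1 : b ≤ 1) (hab : a ≤ b) :
    (a - b)^2 / 2 ≤ a * Real.log a - a * Real.log b - a + b := by
  rcases eq_or_lt_of_le ha with h | h
  · rw [← h]; simp; nlinarith
  · set x := Real.log b - Real.log a with hx
    have hx0 : 0 ≤ x := sub_nonneg.2 (Real.log_le_log h hab)
    have hsinh : x ≤ Real.sinh x := Real.self_le_sinh_iff.2 hx0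
    have hexp : Real.exp x = b / a := by
      rw [hx, Real.exp_sub, Real.exp_log hb, Real.exp_log h]
    have hexp' : Real.exp (-x) = a / b := by
      rw [Real.exp_neg, hexp]; rw [inv_div]
    rw [Real.sinh_eq, hexp, hexp'] at hsinh
    have key : 2 * a * b * x ≤ b^2 - a^2 := by
      have h2 := mul_le_mul_of_nonneg_left hsinh (by positivity : (0:ℝ) ≤ 2 * a * b)
      have h3 : 2 * a * b * ((b / a - a / b) / 2) = b^2 - a^2 := by field_simp
      linarith [h3 ▸ h2]
    have hax : a * Real.log a - a * Real.log b = -(a * x) := by rw [hx]; ring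
    rw [hax]
    nlinarith [sq_nonneg (a - b), mul_nonneg (sq_nonneg (a-b)) (sub_nonneg.2 hb1)]

lemma cross_sum {n m : ℕ} (p : Fin n → ℝ) (q : Fin m → ℝ)
    (hp : ∀ k, 0 < p k) (hq : ∀ l, 0 < q l)
    (X : Matrix (Fin n) (Fin m) ℝ)
    (hrow : ∀ k, ∑ l, X k l = p k) (hcol : ∀ l, ∑ k, X k l = q l) :
    ∑ k, ∑ l, X k l * Real.log (p k * q l)
      = ∑ k, p k * Real.log (p k) + ∑ l, q l * Real.log (q l) := by
  have h : ∀ k l, X k l * Real.log (p k * q l)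
      = X k l * Real.log (p k) + X k l * Real.log (q l) := by
    intro k l; rw [Real.log_mul (hp k).ne' (hq l).ne']; ring
  simp_rw [h, Finset.sum_add_distrib]
  congr 1
  · simp_rw [← Finset.sum_mul, hrow]
  · rw [Finset.sum_comm]
    simp_rw [← Finset.sum_mul, hcol]

lemma fbound {n m : ℕ} (X C : Matrix (Fin n) (Fin m) ℝ)
    (h0 : ∀ k l, 0 ≤ X k l) (h1 : ∀ k l, X k l ≤ 1) :
    |∑ k, ∑ l, X k l * C k l| ≤ ∑ k, ∑ l, |C k l| := by
  calc |∑ k, ∑ l, X k l * C k l| ≤ ∑ k, |∑ l, X k l * C k l| :=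
        Finset.abs_sum_le_sum_abs _ _
    _ ≤ ∑ k, ∑ l, |X k l * C k l| :=
        Finset.sum_le_sum fun k _ => Finset.abs_sum_le_sum_abs _ _
    _ ≤ ∑ k, ∑ l, |C k l| := by
        refine Finset.sum_le_sum fun k _ => Finset.sum_le_sum fun l _ => ?_
        rw [abs_mul, abs_of_nonneg (h0 k l)]
        exact mul_le_of_le_one_left (abs_nonneg _) (h1 k l)

/-- Let `p ∈ ℝ^n`, `q ∈ ℝ^m` be probability vectors with strictly positive
entries, `C` a cost matrix, and for each `ε > 0` let `γ ε` be the (unique) minimizer over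
`Γ(p, q)` of `⟨γ, C⟩_F − ε H(γ)` with `H(γ) = −Σ_{i,j} γ_{ij}(log γ_{ij} − 1)`. Then, as
`ε → ∞`, `γ_ε` converges entrywise to the trivial coupling `p ⊗ q`:
`(γ_ε)_{ij} → p_i q_j`. -/
theorem entropic_plan_tendsto_product {n m : ℕ}
    (p : Fin n → ℝ) (q : Fin m → ℝ)
    (hp0 : ∀ i, 0 < p i) (hp1 : ∑ i, p i = 1)
    (hq0 : ∀ j, 0 < q j) (hq1 : ∑ j, q j = 1)
    (C : Matrix (Fin n) (Fin m) ℝ)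
    (γ : ℝ → Matrix (Fin n) (Fin m) ℝ)
    (hγmem : ∀ ε > 0, γ ε ∈ transportationPolytope p q)
    (hγmin : ∀ ε > 0, ∀ γ' ∈ transportationPolytope p q,
      (∑ i, ∑ j, γ ε i j * C i j)
          - ε * (-(∑ i, ∑ j, γ ε i j * (Real.log (γ ε i j) - 1))) ≤
        (∑ i, ∑ j, γ' i j * C i j)
          - ε * (-(∑ i, ∑ j, γ' i j * (Real.log (γ' i j) - 1)))) :
    ∀ i j, Tendsto (fun ε => γ ε i j) atTop (nhds (p i * q j)) := by
  intro i j
  have hn : 0 < n := i.pos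
  have hm : 0 < m := j.pos
  set π : Matrix (Fin n) (Fin m) ℝ := fun k l => p k * q l with hπdef
  have hπrow : ∀ k, ∑ l, π k l = p k := by
    intro k; simp only [hπdef, ← Finset.mul_sum, hq1, mul_one]
  have hπcol : ∀ l, ∑ k, π k l = q l := by
    intro l; simp only [hπdef, ← Finset.sum_mul, hp1, one_mul]
  have hπmem : π ∈ transportationPolytope p q :=
    ⟨fun k l => (mul_pos (hp0 k) (hq0 l)).le, hπrow, hπcol⟩
  have hp_le1 : ∀ k, p k ≤ 1 := by
    intro k
    rw [← hp1]
    exact Finset.single_le_sum (fun r _ => (hp0 r).le) (Finset.mem_univ k)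
  have hq_le1 : ∀ l, q l ≤ 1 := by
    intro l
    rw [← hq1]
    exact Finset.single_le_sum (fun r _ => (hq0 r).le) (Finset.mem_univ l)
  have hπle1 : ∀ k l, π k l ≤ 1 := fun k l => by
    have := mul_le_mul (hp_le1 k) (hq_le1 l) (hq0 l).le zero_le_one
    simpa [hπdef] using this
  set M : ℝ := ∑ k, ∑ l, |C k l| with hM
  have hM0 : 0 ≤ M := Finset.sum_nonneg fun k _ => Finset.sum_nonneg fun l _ => abs_nonneg _
  -- the key quantitative bound
  have hbound : ∀ ε : ℝ, 0 < ε →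
      |γ ε i j - p i * q j| ≤ (n * m : ℝ) * Real.sqrt (4 * M / ε) := by
    intro ε hε
    obtain ⟨hpos, hrow, hcol⟩ := hγmem ε hε
    set a := γ ε with ha
    set term : Fin n → Fin m → ℝ := fun k l =>
      a k l * Real.log (a k l) - a k l * Real.log (π k l) - a k l + π k l with hterm
    have hterm0 : ∀ k l, 0 ≤ term k l := fun k l =>
      aux_nonneg (hpos k l) (mul_pos (hp0 k) (hq0 l))
    set KL : ℝ := ∑ k, ∑ l, term k l with hKL
    have hKL0 : 0 ≤ KL :=
      Finset.sum_nonneg fun k _ => Finset.sum_nonneg fun l _ => hterm0 k l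
    have hale1 : ∀ k l, a k l ≤ 1 := by
      intro k l
      have h1 : a k l ≤ ∑ l', a k l' :=
        Finset.single_le_sum (fun r _ => hpos k r) (Finset.mem_univ l)
      rw [hrow k] at h1
      exact h1.trans (hp_le1 k)
    -- sums equal 1
    have hsuma : ∑ k, ∑ l, a k l = 1 := by simp_rw [hrow]; exact hp1
    have hsumπ : ∑ k, ∑ l, π k l = 1 := by simp_rw [hπrow]; exact hp1
    -- cross-entropy identity
    have hcross : ∑ k, ∑ l, a k l * Real.log (π k l)
        = ∑ k, ∑ l, π k l * Real.log (π k l) := by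
      have h1 := cross_sum p q hp0 hq0 a hrow hcol
      have h2 := cross_sum p q hp0 hq0 π hπrow hπcol
      simp only [hπdef] at h1 h2 ⊢
      rw [h1, h2]
    -- KL = F(a) - F(π)
    have hKLeq : KL = (∑ k, ∑ l, a k l * (Real.log (a k l) - 1))
        - (∑ k, ∑ l, π k l * (Real.log (π k l) - 1)) := by
      have e1 : ∀ k l, a k l * (Real.log (a k l) - 1)
          = a k l * Real.log (a k l) - a k l := fun k l => by ring
      have e2 : ∀ k l, π k l * (Real.log (π k l) - 1)
          = π k l * Real.log (π k l) - π k l := fun k l => by ring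
      have eA : ∑ k, ∑ l, a k l * (Real.log (a k l) - 1)
          = (∑ k, ∑ l, a k l * Real.log (a k l)) - 1 := by
        simp_rw [e1, Finset.sum_sub_distrib]
        rw [hsuma]
      have eB : ∑ k, ∑ l, π k l * (Real.log (π k l) - 1)
          = (∑ k, ∑ l, π k l * Real.log (π k l)) - 1 := by
        simp_rw [e2, Finset.sum_sub_distrib]
        rw [hsumπ]
      have expand : KL = (∑ k, ∑ l, a k l * Real.log (a k l))
          - (∑ k, ∑ l, a k l * Real.log (π k l))
          - (∑ k, ∑ l, a k l) + (∑ k, ∑ l, π k l) := by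
        rw [hKL]
        simp_rw [hterm, Finset.sum_add_distrib, Finset.sum_sub_distrib]
      rw [expand, eA, eB, hsuma, hsumπ, hcross]
      ring
    -- optimality gives ε * KL ≤ 2 M
    have hKLle : ε * KL ≤ 2 * M := by
      have hmin := hγmin ε hε π hπmem
      have hfa : |∑ k, ∑ l, a k l * C k l| ≤ M := fbound a C hpos hale1
      have hfπ : |∑ k, ∑ l, π k l * C k l| ≤ M :=
        fbound π C (fun k l => (mul_pos (hp0 k) (hq0 l)).le) hπle1
      rw [hKLeq]
      rw [abs_le] at hfa hfπ
      nlinarith [hmin]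
    have hKLle' : KL ≤ 2 * M / ε := (le_div_iff₀ hε).2 (by linarith)
    set r : ℝ := Real.sqrt (4 * M / ε) with hr
    have hr0 : 0 ≤ r := Real.sqrt_nonneg _
    -- each "negative part" entry is ≤ r
    have hneg : ∀ k l, max (π k l - a k l) 0 ≤ r := by
      intro k l
      rcases le_total (a k l) (π k l) with h | h
      · rw [max_eq_left (by linarith)]
        have hterm_le : term k l ≤ KL := by
          have h1 : term k l ≤ ∑ l', term k l' :=
            Finset.single_le_sum (fun r _ => hterm0 k r) (Finset.mem_univ l)
          refine h1.trans ?_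
          exact Finset.single_le_sum
            (fun r _ => Finset.sum_nonneg fun l' _ => hterm0 r l')
            (Finset.mem_univ k)
        have hq1' : (a k l - π k l)^2 / 2 ≤ term k l :=
          aux_quad (hpos k l) (mul_pos (hp0 k) (hq0 l)) (hπle1 k l) h
        have h2 : (π k l - a k l)^2 ≤ 4 * M / ε := by
          have h3 : (a k l - π k l)^2 = (π k l - a k l)^2 := by ring
          rw [h3] at hq1'
          have h6 := hq1'.trans hterm_le
          have h5 : (π k l - a k l)^2 ≤ 2 * KL := by linarith [h6]
          rw [le_div_iff₀ hε]
          linarith [mul_le_mul_of_nonneg_right h5 hε.le, hKLle]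
        calc π k l - a k l ≤ |π k l - a k l| := le_abs_self _
          _ = Real.sqrt ((π k l - a k l)^2) := (Real.sqrt_sq_eq_abs _).symm
          _ ≤ r := Real.sqrt_le_sqrt h2
      · rw [max_eq_right (by linarith)]; exact hr0
    set S : ℝ := ∑ k, ∑ l, max (π k l - a k l) 0 with hS
    have hSle : S ≤ (n * m : ℝ) * r := by
      have h1 : ∀ k, ∑ l, max (π k l - a k l) 0 ≤ (m : ℝ) * r := by
        intro k
        calc ∑ l, max (π k l - a k l) 0 ≤ ∑ _l : Fin m, r :=
              Finset.sum_le_sum fun l _ => hneg k l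
          _ = (m : ℝ) * r := by simp [Finset.sum_const, nsmul_eq_mul]
      calc S ≤ ∑ _k : Fin n, (m : ℝ) * r := Finset.sum_le_sum fun k _ => h1 k
        _ = (n : ℝ) * ((m : ℝ) * r) := by simp [Finset.sum_const, nsmul_eq_mul]
        _ = (n * m : ℝ) * r := by ring
    have hTS : ∑ k, ∑ l, max (a k l - π k l) 0 = S := by
      have h1 : ∀ k l, max (a k l - π k l) 0 - max (π k l - a k l) 0
          = a k l - π k l := by
        intro k l
        rcases le_total (a k l) (π k l) with h | h
        · rw [max_eq_right (by linarith), max_eq_left (by linarith)]; ring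
        · rw [max_eq_left (by linarith), max_eq_right (by linarith)]; ring
      have h2 : (∑ k, ∑ l, max (a k l - π k l) 0) - S
          = ∑ k, ∑ l, (a k l - π k l) := by
        rw [hS]
        simp_rw [← Finset.sum_sub_distrib]
        exact Finset.sum_congr rfl fun k _ => Finset.sum_congr rfl fun l _ => h1 k l
      have h3 : ∑ k, ∑ l, (a k l - π k l) = 0 := by
        simp_rw [Finset.sum_sub_distrib]
        rw [hsuma, hsumπ]; ring
      linarith [h2, h3]
    have hone : (1 : ℝ) ≤ (n * m : ℝ) := by
      have : (1 : ℕ) ≤ n * m := Nat.one_le_iff_ne_zero.2 (by positivity)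
      exact_mod_cast this
    have hfinal : |a i j - π i j| ≤ (n * m : ℝ) * r := by
      rcases le_total (a i j) (π i j) with h | h
      · rw [abs_of_nonpos (by linarith)]
        have := hneg i j
        rw [max_eq_left (by linarith)] at this
        nlinarith
      · rw [abs_of_nonneg (by linarith)]
        have h1 : a i j - π i j ≤ max (a i j - π i j) 0 := le_max_left _ _
        have h2 : max (a i j - π i j) 0 ≤ ∑ k, ∑ l, max (a k l - π k l) 0 := by
          have h3 : max (a i j - π i j) 0 ≤ ∑ l, max (a i l - π i l) 0 :=
            Finset.single_le_sum (f := fun l => max (a i l - π i l) 0)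
              (fun l _ => le_max_right _ _) (Finset.mem_univ j)
          refine h3.trans ?_
          exact Finset.single_le_sum (f := fun k => ∑ l, max (a k l - π k l) 0)
            (fun k _ => Finset.sum_nonneg fun l _ => le_max_right _ _)
            (Finset.mem_univ i)
        rw [hTS] at h2
        linarith [hSle]
    simpa [hπdef] using hfinal
  -- squeeze
  have hg : Tendsto (fun ε : ℝ => (n * m : ℝ) * Real.sqrt (4 * M / ε)) atTop (nhds 0) := by
    have h2 : Tendsto (fun ε : ℝ => 4 * M / ε) atTop (nhds 0) := by
      simpa [div_eq_mul_inv] using tendsto_inv_atTop_zero.const_mul (4 * M)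
    have h3 : Tendsto (fun ε : ℝ => Real.sqrt (4 * M / ε)) atTop (nhds 0) := by
      have := (Real.continuous_sqrt.tendsto 0).comp h2
      simpa [Function.comp_def] using this
    simpa using h3.const_mul ((n * m : ℝ))
  have h0 : Tendsto (fun ε => γ ε i j - p i * q j) atTop (nhds 0) := by
    apply squeeze_zero_norm' _ hg
    filter_upwards [eventually_gt_atTop 0] with ε hε
    simpa [Real.norm_eq_abs] using hbound ε hε
  have := h0.add_const (p i * q j)
  simpa using this
end

section
/- Let p ∈ ℝ^n and q ∈ ℝ^m be probability vectors. Then every extreme point γ of the transportation polytope Γ(p, q) has at most n + m − 1 nonzero entries, i.e. the cardinality of {(i,j) : γ_{ij} ≠ 0} is at most n + m − 1. Consequently, an optimal solution of the linear program min_{γ ∈ Γ(p,q)} ⟨γ, C⟩_F can always be chosen with at most n + m − 1 nonzero entries. -/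
open scoped BigOperators

/-- The linear functional `(u, v) ↦ ∑ u - ∑ v`. -/
noncomputable def sumDiffMap (n m : ℕ) : ((Fin n → ℝ) × (Fin m → ℝ)) →ₗ[ℝ] ℝ where
  toFun x := (∑ i, x.1 i) - ∑ j, x.2 j
  map_add' x y := by simp [Finset.sum_add_distrib]; ring
  map_smul' c x := by simp [Finset.mul_sum, mul_sub]

theorem sparse_extreme_aux {n m : ℕ} (p : Fin n → ℝ) (q : Fin m → ℝ)
    (hp1 : ∑ i, p i = 1)
    (γ : Matrix (Fin n) (Fin m) ℝ)
    (hγ : γ ∈ Set.extremePoints ℝ (transportationPolytope p q)) :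
    {ij : Fin n × Fin m | γ ij.1 ij.2 ≠ 0}.ncard ≤ n + m - 1 := by
  classical
  have hn : 0 < n := by
    rcases Nat.eq_zero_or_pos n with h | h
    · subst h; simp at hp1
    · exact h
  obtain ⟨hpos, hrow, hcol⟩ := hγ.1
  have hsurj : Function.Surjective (sumDiffMap n m) := by
    intro r
    refine ⟨(Pi.single ⟨0, hn⟩ r, 0), ?_⟩
    show (∑ i, Pi.single (⟨0, hn⟩ : Fin n) r i) - ∑ j, (0 : Fin m → ℝ) j = r
    simp [Finset.sum_pi_single']
  have hWrank : Module.finrank ℝ (LinearMap.ker (sumDiffMap n m)) = n + m - 1 := by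
    have h1 := LinearMap.finrank_range_add_finrank_ker (sumDiffMap n m)
    rw [LinearMap.range_eq_top.2 hsurj, finrank_top] at h1
    have hdom : Module.finrank ℝ ((Fin n → ℝ) × (Fin m → ℝ)) = n + m := by
      simp [Module.finrank_prod, Module.finrank_pi]
    rw [hdom, Module.finrank_self] at h1
    omega
  set S := {ij : Fin n × Fin m | γ ij.1 ij.2 ≠ 0} with hS
  haveI : Fintype ↥S := Fintype.ofFinite _
  have hv : ∀ ij : Fin n × Fin m,
      ((Pi.single ij.1 (1:ℝ), Pi.single ij.2 (1:ℝ)) : (Fin n → ℝ) × (Fin m → ℝ)) ∈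
        LinearMap.ker (sumDiffMap n m) := by
    intro ij
    rw [LinearMap.mem_ker]
    show (∑ i, Pi.single ij.1 (1:ℝ) i) - ∑ j, Pi.single ij.2 (1:ℝ) j = 0
    simp [Finset.sum_pi_single']
  set v : S → LinearMap.ker (sumDiffMap n m) := fun k => ⟨_, hv k.1⟩ with hv'
  have hli : LinearIndependent ℝ v := by
    rw [Fintype.linearIndependent_iff]
    intro g hg k0
    set G : Fin n × Fin m → ℝ := fun ij => if h : ij ∈ S then g ⟨ij, h⟩ else 0 with hGdef
    have hGk : ∀ k : S, G k.1 = g k := fun k => dif_pos k.2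
    have hG0 : ∀ ij, ij ∉ S → G ij = 0 := fun ij h => dif_neg h
    -- project the vanishing combination to the ambient space
    have hg' : (∑ k : S, g k • ((Pi.single (k.1).1 (1:ℝ), Pi.single (k.1).2 (1:ℝ)) :
        (Fin n → ℝ) × (Fin m → ℝ))) = 0 := by
      have h := congrArg (Submodule.subtype (LinearMap.ker (sumDiffMap n m))) hg
      rw [map_sum] at h
      simpa [hv'] using h
    have hsplit : ∀ (F : Fin n × Fin m → (Fin n → ℝ) × (Fin m → ℝ)),
        (∑ ij : Fin n × Fin m, G ij • F ij) = ∑ k : S, g k • F k.1 := by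
      intro F
      rw [← Finset.sum_filter_of_ne (p := fun ij => ij ∈ S)
        (fun x _ hx => by by_contra h; exact hx (by simp [hG0 x h]))]
      rw [Finset.sum_subtype (p := fun ij => ij ∈ S) (Finset.univ.filter (fun ij => ij ∈ S)) (fun x => by simp)
        (fun ij => G ij • F ij)]
      exact Finset.sum_congr rfl fun k _ => by rw [hGk]
    have hfull : (∑ ij : Fin n × Fin m, G ij • ((Pi.single ij.1 (1:ℝ), Pi.single ij.2 (1:ℝ)) :
        (Fin n → ℝ) × (Fin m → ℝ))) = 0 :=
      (hsplit _).trans hg'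
    have hfst : (∑ ij : Fin n × Fin m, G ij • (Pi.single ij.1 1 : Fin n → ℝ)) = 0 := by
      have := congrArg Prod.fst hfull
      simpa [Prod.fst_sum] using this
    have hsnd : (∑ ij : Fin n × Fin m, G ij • (Pi.single ij.2 1 : Fin m → ℝ)) = 0 := by
      have := congrArg Prod.snd hfull
      simpa [Prod.snd_sum] using this
    have hrowδ : ∀ i, (∑ j, G (i, j)) = 0 := by
      intro i
      have := congrFun hfst i
      simpa [Finset.sum_apply, Pi.single_apply, Fintype.sum_prod_type_right,
        Finset.sum_ite_eq] using this
    have hcolδ : ∀ j, (∑ i, G (i, j)) = 0 := by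
      intro j
      have := congrFun hsnd j
      simpa [Finset.sum_apply, Pi.single_apply, Fintype.sum_prod_type,
        Finset.sum_ite_eq] using this
    -- build the perturbation
    haveI : Nonempty ↥S := ⟨k0⟩
    set μ := Finset.univ.inf' Finset.univ_nonempty (fun k : S => γ (k.1).1 (k.1).2) with hμ
    have hμpos : 0 < μ := by
      rw [hμ, Finset.lt_inf'_iff]
      intro k _
      exact lt_of_le_of_ne (hpos _ _) (Ne.symm k.2)
    set M₀ := Finset.univ.sup' Finset.univ_nonempty (fun k : S => |g k|) with hM₀
    have hM0 : 0 ≤ M₀ := by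
      rw [hM₀]
      exact le_trans (abs_nonneg (g k0)) (Finset.le_sup' (fun k : S => |g k|) (Finset.mem_univ k0))
    have hGbound : ∀ ij, |G ij| ≤ M₀ := by
      intro ij
      by_cases h : ij ∈ S
      · rw [show G ij = g ⟨ij, h⟩ from dif_pos h, hM₀]
        exact Finset.le_sup' (fun k : S => |g k|) (Finset.mem_univ (⟨ij, h⟩ : S))
      · simp [hG0 _ h, hM0]
    set ε := μ / (M₀ + 1) with hε
    have hεpos : 0 < ε := div_pos hμpos (by linarith)
    have hkey : ∀ ij : Fin n × Fin m, ij ∈ S → ε * |G ij| ≤ γ ij.1 ij.2 := by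
      intro ij h
      have h1 : ε * |G ij| ≤ ε * M₀ := mul_le_mul_of_nonneg_left (hGbound ij) hεpos.le
      have h2 : ε * M₀ ≤ μ := by
        rw [hε, div_mul_eq_mul_div, div_le_iff₀ (by linarith)]
        nlinarith
      have h3 : μ ≤ γ ij.1 ij.2 := by
        rw [hμ]
        exact Finset.inf'_le (fun k : S => γ (k.1).1 (k.1).2) (Finset.mem_univ (⟨ij, h⟩ : S))
      linarith
    have habmem : ∀ t : ℝ, |t| ≤ ε →
        Matrix.of (fun i j => γ i j + t * G (i, j)) ∈ transportationPolytope p q := by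
      intro t ht
      refine ⟨fun i j => ?_, fun i => ?_, fun j => ?_⟩
      · by_cases h : (i, j) ∈ S
        · have h1 : |t * G (i, j)| ≤ ε * |G (i, j)| := by
            rw [abs_mul]
            exact mul_le_mul_of_nonneg_right ht (abs_nonneg _)
          have h2 := hkey (i, j) h
          have h3 := neg_abs_le (t * G (i, j))
          simp only [Matrix.of_apply]
          linarith
        · have : γ i j = 0 := by by_contra h'; exact h h'
          simp [Matrix.of_apply, hG0 _ h, this]
      · simp only [Matrix.of_apply]
        rw [Finset.sum_add_distrib, hrow i, ← Finset.mul_sum, hrowδ i, mul_zero, add_zero]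
      · simp only [Matrix.of_apply]
        rw [Finset.sum_add_distrib, hcol j, ← Finset.mul_sum, hcolδ j, mul_zero, add_zero]
    have ha := habmem (-ε) (by rw [abs_neg, abs_of_pos hεpos])
    have hb := habmem ε (by rw [abs_of_pos hεpos])
    have hseg : γ ∈ openSegment ℝ (Matrix.of fun i j => γ i j + (-ε) * G (i, j))
        (Matrix.of fun i j => γ i j + ε * G (i, j)) := by
      refine ⟨1/2, 1/2, by norm_num, by norm_num, by norm_num, ?_⟩
      ext i j
      simp only [Matrix.add_apply, Matrix.smul_apply, Matrix.of_apply, smul_eq_mul]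
      ring
    have hb' := hγ.2 hb ha (by rw [openSegment_symm]; exact hseg)
    have hentry := congrArg (fun M : Matrix (Fin n) (Fin m) ℝ => M (k0.1).1 (k0.1).2) hb'
    simp only [Matrix.of_apply] at hentry
    have hε0 : ε * G k0.1 = 0 := by
      have : γ (k0.1).1 (k0.1).2 + ε * G ((k0.1).1, (k0.1).2) = γ (k0.1).1 (k0.1).2 := hentry
      simpa using this
    have : G k0.1 = 0 := by
      rcases mul_eq_zero.1 hε0 with h | h
      · exact absurd h hεpos.ne'
      · exact h
    rw [← hGk k0, this]
  have hcard := hli.fintype_card_le_finrank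
  rw [hWrank] at hcard
  calc S.ncard = Nat.card ↥S := (Nat.card_coe_set_eq S).symm
    _ = Fintype.card ↥S := Nat.card_eq_fintype_card
    _ ≤ n + m - 1 := hcard

/-- For probability vectors `p ∈ ℝ^n` and `q ∈ ℝ^m`, every extreme point
of the transportation polytope `Γ(p, q)` has at most `n + m − 1` nonzero entries;
consequently, for any cost matrix `C`, an optimal solution of the linear program
`min_{γ ∈ Γ(p,q)} ⟨γ, C⟩_F` can be chosen with at most `n + m − 1` nonzero entries. -/
theorem extremePoints_sparse_and_sparse_optimal_plan {n m : ℕ}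
    (p : Fin n → ℝ) (q : Fin m → ℝ)
    (hp0 : ∀ i, 0 ≤ p i) (hp1 : ∑ i, p i = 1)
    (hq0 : ∀ j, 0 ≤ q j) (hq1 : ∑ j, q j = 1) :
    (∀ γ ∈ Set.extremePoints ℝ (transportationPolytope p q),
      {ij : Fin n × Fin m | γ ij.1 ij.2 ≠ 0}.ncard ≤ n + m - 1) ∧
    ∀ C : Matrix (Fin n) (Fin m) ℝ,
      ∃ γstar ∈ transportationPolytope p q,
        (∀ γ ∈ transportationPolytope p q,
          (∑ i, ∑ j, γstar i j * C i j) ≤ ∑ i, ∑ j, γ i j * C i j) ∧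
        {ij : Fin n × Fin m | γstar ij.1 ij.2 ≠ 0}.ncard ≤ n + m - 1 := by
  classical
  refine ⟨fun γ hγ => sparse_extreme_aux p q hp1 γ hγ, ?_⟩
  intro C
  set tp := transportationPolytope p q with htp
  -- nonempty
  have hne : tp.Nonempty := by
    refine ⟨Matrix.of fun i j => p i * q j, fun i j => mul_nonneg (hp0 i) (hq0 j),
      fun i => ?_, fun j => ?_⟩
    · simp only [Matrix.of_apply]
      rw [← Finset.mul_sum, hq1, mul_one]
    · simp only [Matrix.of_apply]
      rw [← Finset.sum_mul, hp1, one_mul]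
  -- entry evaluation is continuous
  have hc1 : ∀ (i : Fin n) (j : Fin m),
      Continuous fun γ : Matrix (Fin n) (Fin m) ℝ => γ i j :=
    fun i j => (continuous_id.matrix_elem i j)
  -- closed
  have hclosed : IsClosed tp := by
    have : tp = (⋂ i, ⋂ j, {γ : Matrix (Fin n) (Fin m) ℝ | 0 ≤ γ i j}) ∩
        ((⋂ i, {γ : Matrix (Fin n) (Fin m) ℝ | ∑ j, γ i j = p i}) ∩
         (⋂ j, {γ : Matrix (Fin n) (Fin m) ℝ | ∑ i, γ i j = q j})) := by
      ext γ
      simp only [htp, transportationPolytope, Set.mem_setOf_eq, Set.mem_inter_iff,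
        Set.mem_iInter]
    rw [this]
    exact ((isClosed_iInter fun i => isClosed_iInter fun j =>
        isClosed_le continuous_const (hc1 i j))).inter
      ((isClosed_iInter fun i => isClosed_eq
          (continuous_finset_sum _ fun j _ => hc1 i j) continuous_const).inter
       (isClosed_iInter fun j => isClosed_eq
          (continuous_finset_sum _ fun i _ => hc1 i j) continuous_const))
  -- bounded inside a compact cube
  have hsub : tp ⊆ {γ : Matrix (Fin n) (Fin m) ℝ | ∀ i j, γ i j ∈ Set.Icc (0:ℝ) 1} := by
    rintro γ ⟨h0, hr, _⟩ i j
    refine ⟨h0 i j, ?_⟩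
    have h1 : γ i j ≤ ∑ j', γ i j' :=
      Finset.single_le_sum (fun j' _ => h0 i j') (Finset.mem_univ j)
    have h2 : p i ≤ ∑ i', p i' :=
      Finset.single_le_sum (fun i' _ => hp0 i') (Finset.mem_univ i)
    rw [hr i] at h1
    rw [hp1] at h2
    linarith
  have hKcomp : IsCompact {γ : Matrix (Fin n) (Fin m) ℝ | ∀ i j, γ i j ∈ Set.Icc (0:ℝ) 1} := by
    have h1 : IsCompact {f : Fin n → Fin m → ℝ | ∀ i j, f i j ∈ Set.Icc (0:ℝ) 1} := by
      have heq : {f : Fin n → Fin m → ℝ | ∀ i j, f i j ∈ Set.Icc (0:ℝ) 1} =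
          Set.pi Set.univ (fun _ : Fin n => Set.pi Set.univ fun _ : Fin m => Set.Icc (0:ℝ) 1) := by
        ext f
        simp only [Set.mem_setOf_eq, Set.mem_pi, Set.mem_univ, true_implies]
      rw [heq]
      exact isCompact_univ_pi fun _ => isCompact_univ_pi fun _ => isCompact_Icc
    exact h1
  have hcompact : IsCompact tp := hKcomp.of_isClosed_subset hclosed hsub
  -- the (negated) cost functional
  haveI : FiniteDimensional ℝ (Matrix (Fin n) (Fin m) ℝ) :=
    inferInstanceAs (FiniteDimensional ℝ (Fin n → Fin m → ℝ))
  let L : Matrix (Fin n) (Fin m) ℝ →ₗ[ℝ] ℝ :=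
    { toFun := fun γ => -(∑ i, ∑ j, γ i j * C i j)
      map_add' := fun x y => by
        simp only [Matrix.add_apply, add_mul, Finset.sum_add_distrib]
        ring
      map_smul' := fun c x => by
        simp only [Matrix.smul_apply, smul_eq_mul, RingHom.id_apply, mul_neg, neg_inj,
          Finset.mul_sum, mul_assoc] }
  let Lc : Matrix (Fin n) (Fin m) ℝ →L[ℝ] ℝ := ⟨L, L.continuous_of_finiteDimensional⟩
  obtain ⟨x0, hx0, hmax⟩ := hcompact.exists_isMaxOn hne Lc.continuous.continuousOn
  set t := {x ∈ tp | ∀ y ∈ tp, Lc y ≤ Lc x} with ht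
  have hexp : IsExposed ℝ tp t := fun _ => ⟨Lc, rfl⟩
  have htne : t.Nonempty := ⟨x0, hx0, fun y hy => hmax hy⟩
  have htcomp : IsCompact t := hexp.isCompact hcompact
  haveI : LocallyConvexSpace ℝ (Matrix (Fin n) (Fin m) ℝ) :=
    inferInstanceAs (LocallyConvexSpace ℝ (Fin n → Fin m → ℝ))
  obtain ⟨γs, hγs⟩ := htcomp.extremePoints_nonempty htne
  have hγt : γs ∈ t := hγs.1
  have hext : γs ∈ Set.extremePoints ℝ tp :=
    (hexp.isExtreme.extremePoints_subset_extremePoints) hγs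
  refine ⟨γs, hγt.1, ?_, sparse_extreme_aux p q hp1 γs hext⟩
  intro γ hγ
  have h2 : -(∑ i, ∑ j, γ i j * C i j) ≤ -(∑ i, ∑ j, γs i j * C i j) := hγt.2 γ hγ
  linarith
end
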